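/- (Lower bound on the Frobenius residual of any linear attacker under information compression.) Let G be a real p×m matrix with rank G ≤ r ≤ m. Then for every real m×p matrix A, ‖A · G − I_m‖_F² ≥ m − r. -/

import Mathlib

open scoped InnerProductSpace BigOperators
open scoped Matrix

/-- lower bound on the Frobenius residual of any linear attacker under information
compression: if `G` is a real `p × m` matrix with `rank G ≤ r ≤ m`, then for every real `m × p`
matrix `A`, `‖A · G − I_m‖_F² ≥ m − r`. -/
theorem attacker_frobenius_residual_lower_bound
    (m p r : ℕ) (G : Matrix (Fin p) (Fin m) ℝ)
    (hrank : G.rank ≤ r) (hr : r ≤ m) :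
    ∀ A : Matrix (Fin m) (Fin p) ℝ,
      (m : ℝ) - (r : ℝ) ≤ ∑ i : Fin m, ∑ j : Fin m, ((A * G - (1 : Matrix (Fin m) (Fin m) ℝ)) i j) ^ 2 := by
  intro A
  classical
  set M : Matrix (Fin m) (Fin m) ℝ := A * G - 1 with hMdef
  set T := Matrix.toEuclideanLin (A * G) with hTdef
  set K := LinearMap.ker T with hKdef
  set n := Module.finrank ℝ K with hndef
  -- rank facts
  have hrankAG : (A * G).rank ≤ r := le_trans (Matrix.rank_mul_le_right A G) hrank
  have hrange : (A * G).rank = Module.finrank ℝ (LinearMap.range T) := by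
    rw [hTdef, Matrix.toEuclideanLin_eq_toLin]
    exact Matrix.rank_eq_finrank_range_toLin (A * G) (PiLp.basisFun 2 ℝ (Fin m))
      (PiLp.basisFun 2 ℝ (Fin m))
  have hrn : (A * G).rank + n = m := by
    have h := LinearMap.finrank_range_add_finrank_ker T
    rw [← hrange] at h
    simpa using h
  have hnm : n ≤ m := by omega
  have hmn : (m : ℝ) - r ≤ (n : ℝ) := by
    have : m ≤ r + n := by omega
    have := Nat.cast_le (α := ℝ) |>.mpr this
    push_cast at this
    linarith
  -- orthonormal basis adapted to the kernel
  set b := stdOrthonormalBasis ℝ K with hbdef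
  set v : Fin m → EuclideanSpace ℝ (Fin m) :=
    fun i => if h : (i : ℕ) < n then (b ⟨i, h⟩ : EuclideanSpace ℝ (Fin m)) else 0 with hvdef
  have hcard : Module.finrank ℝ (EuclideanSpace ℝ (Fin m)) = Fintype.card (Fin m) := by simp
  have hv : Orthonormal ℝ (Set.restrict {i : Fin m | (i : ℕ) < n} v) := by
    rw [orthonormal_iff_ite]
    rintro ⟨i, hi⟩ ⟨j, hj⟩
    have hi' : (i : ℕ) < n := hi
    have hj' : (j : ℕ) < n := hj
    have hbo := (stdOrthonormalBasis ℝ K).orthonormal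
    rw [orthonormal_iff_ite] at hbo
    show ⟪v i, v j⟫_ℝ = _
    simp only [hvdef, dif_pos hi', dif_pos hj']
    rw [← Submodule.coe_inner, hbo ⟨i, hi'⟩ ⟨j, hj'⟩]
    simp only [Fin.mk.injEq, Subtype.mk.injEq, Fin.val_inj]
  obtain ⟨B, hB⟩ := hv.exists_orthonormalBasis_extension_of_card_eq hcard
  have hBo := B.orthonormal
  rw [orthonormal_iff_ite] at hBo
  -- the orthogonal matrix with columns `B i`
  set U : Matrix (Fin m) (Fin m) ℝ := Matrix.of (fun j i => B i j) with hUdef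
  have hUtU : Uᵀ * U = 1 := by
    ext i k
    have := hBo i k
    rw [PiLp.inner_apply] at this
    simp only [RCLike.inner_apply, starRingEnd_apply, star_trivial] at this
    simp only [Matrix.mul_apply, Matrix.transpose_apply, hUdef, Matrix.of_apply, Matrix.one_apply]
    rw [← this]
    exact Finset.sum_congr rfl fun x _ => mul_comm _ _
  have hUUt : U * Uᵀ = 1 := mul_eq_one_comm.mp hUtU
  -- Frobenius invariance under right multiplication by U
  have htr : ∀ N : Matrix (Fin m) (Fin m) ℝ, (Nᵀ * N).trace = ∑ i, ∑ j, (N j i) ^ 2 := by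
    intro N
    simp [Matrix.trace, Matrix.diag, Matrix.mul_apply, sq]
  have key : ∑ i, ∑ j, (M i j) ^ 2 = ∑ i, ∑ j, ((M * U) j i) ^ 2 := by
    rw [← htr (M * U)]
    have h2 : (M * U)ᵀ * (M * U) = Uᵀ * (Mᵀ * M) * U := by
      rw [Matrix.transpose_mul]
      noncomm_ring
    rw [h2, Matrix.trace_mul_cycle, ← Matrix.mul_assoc, hUUt, Matrix.one_mul, htr]
    rw [Finset.sum_comm]
  rw [key]
  -- each column of `M * U` with index `i < n` has norm 1
  have hterm : ∀ i : Fin m, (i : ℕ) < n → ∑ j, ((M * U) j i) ^ 2 = 1 := by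
    intro i hi
    have hBi : B i = v i := hB i hi
    have hKmem : ((b ⟨i, hi⟩ : K) : EuclideanSpace ℝ (Fin m)) ∈ K := (b ⟨i, hi⟩).2
    have hker : (A * G) *ᵥ (fun j => B i j) = 0 := by
      have h0 : T (B i) = 0 := by
        rw [hBi, hvdef]
        simp only [dif_pos hi]
        exact LinearMap.mem_ker.mp hKmem
      exact congrArg WithLp.ofLp h0
    have hcol : ∀ j, (M * U) j i = - B i j := by
      intro j
      have : (M * U) j i = (M *ᵥ (fun k => B i k)) j := by
        simp [Matrix.mul_apply, Matrix.mulVec, dotProduct, hUdef]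
      rw [this, hMdef, Matrix.sub_mulVec, hker]
      simp [Matrix.one_mulVec]
    have hnorm : ∑ j, (B i j) ^ 2 = 1 := by
      have h1 := hBo i i
      rw [PiLp.inner_apply] at h1
      simp only [RCLike.inner_apply, starRingEnd_apply, star_trivial, if_true,
        eq_self_iff_true] at h1
      calc ∑ j, (B i j) ^ 2 = ∑ j, B i j * B i j := by
            refine Finset.sum_congr rfl fun j _ => ?_; ring
        _ = 1 := h1
    calc ∑ j, ((M * U) j i) ^ 2 = ∑ j, (B i j) ^ 2 := by
          refine Finset.sum_congr rfl fun j _ => ?_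
          rw [hcol j]; ring
      _ = 1 := hnorm
  -- lower bound the double sum by the number of kernel indices
  have hsub : (Finset.univ : Finset (Fin n)).map (Fin.castLEEmb hnm) ⊆ Finset.univ :=
    Finset.subset_univ _
  have hge : (n : ℝ) ≤ ∑ i, ∑ j, ((M * U) j i) ^ 2 := by
    have hmono : ∑ i ∈ (Finset.univ : Finset (Fin n)).map (Fin.castLEEmb hnm),
        ∑ j, ((M * U) j i) ^ 2 ≤ ∑ i, ∑ j, ((M * U) j i) ^ 2 :=
      Finset.sum_le_sum_of_subset_of_nonneg hsub
        (fun i _ _ => Finset.sum_nonneg fun j _ => sq_nonneg (((M * U) j i)))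
    refine le_trans ?_ hmono
    rw [Finset.sum_map]
    have : ∀ i : Fin n, ∑ j, ((M * U) j (Fin.castLEEmb hnm i)) ^ 2 = 1 := by
      intro i
      exact hterm _ (by simpa using i.2)
    rw [Finset.sum_congr rfl (fun i _ => this i)]
    simp
  linarith
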